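/- As λ → ∞, the discounted value function converges pointwise to h: for a trajectory with h continuous at x₀ and bounded, lim_{λ→∞} V_λ(x₀) = h(x₀). -/

import Mathlib

lemma aux_integral_lam_exp (lam a b : ℝ) :
    ∫ s in a..b, lam * Real.exp (-lam * s) = Real.exp (-lam * a) - Real.exp (-lam * b) := by
  have hd : ∀ s ∈ Set.uIcc a b, HasDerivAt (fun s => -Real.exp (-lam * s))
      (lam * Real.exp (-lam * s)) s := by
    intro s _
    have h1 : HasDerivAt (fun s : ℝ => -lam * s) (-lam) s := by
      simpa using (hasDerivAt_id s).const_mul (-lam)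
    have h2 := (h1.exp).neg
    rw [show lam * Real.exp (-lam * s) = -(Real.exp (-lam * s) * -lam) by ring]; exact h2
  have hi : IntervalIntegrable (fun s => lam * Real.exp (-lam * s)) MeasureTheory.volume a b :=
    (by continuity : Continuous fun s : ℝ => lam * Real.exp (-lam * s)).intervalIntegrable a b
  rw [intervalIntegral.integral_eq_sub_of_hasDerivAt hd hi]
  ring

lemma aux_abs_integral_le (lam M a b : ℝ) (hlam : 0 ≤ lam) (hab : a ≤ b)
    (u : ℝ → ℝ) (hu : Continuous u) (hbd : ∀ s, s ∈ Set.Icc a b → |u s| ≤ M) :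
    |∫ s in a..b, lam * Real.exp (-lam * s) * u s| ≤
      M * (Real.exp (-lam * a) - Real.exp (-lam * b)) := by
  have hInt : IntervalIntegrable (fun s => lam * Real.exp (-lam * s) * u s)
      MeasureTheory.volume a b :=
    (by continuity : Continuous fun s : ℝ => lam * Real.exp (-lam * s) * u s).intervalIntegrable a b
  have hInt2 : IntervalIntegrable (fun s => lam * Real.exp (-lam * s) * M)
      MeasureTheory.volume a b :=
    (by continuity : Continuous fun s : ℝ => lam * Real.exp (-lam * s) * M).intervalIntegrable a b
  have h1 : |∫ s in a..b, lam * Real.exp (-lam * s) * u s| ≤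
      ∫ s in a..b, |lam * Real.exp (-lam * s) * u s| :=
    intervalIntegral.abs_integral_le_integral_abs hab
  have h2 : (∫ s in a..b, |lam * Real.exp (-lam * s) * u s|) ≤
      ∫ s in a..b, lam * Real.exp (-lam * s) * M := by
    apply intervalIntegral.integral_mono_on hab _ hInt2
    · intro s hs
      have := hbd s hs
      have he : (0:ℝ) ≤ lam * Real.exp (-lam * s) :=
        mul_nonneg hlam (Real.exp_pos _).le
      rw [abs_mul, abs_of_nonneg he]
      exact mul_le_mul_of_nonneg_left this he
    · exact hInt.abs
  have h3 : (∫ s in a..b, lam * Real.exp (-lam * s) * M) =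
      M * (Real.exp (-lam * a) - Real.exp (-lam * b)) := by
    have : (fun s => lam * Real.exp (-lam * s) * M) =
        fun s => M * (lam * Real.exp (-lam * s)) := by funext s; ring
    rw [this, intervalIntegral.integral_const_mul, aux_integral_lam_exp]
  linarith

lemma aux_key (lam δ ε C : ℝ) (hlam : 0 < lam) (hδ : 0 < δ) (hε : 0 < ε) (hC : 0 ≤ C)
    (u : ℝ → ℝ) (hu : Continuous u) (hbd : ∀ s, |u s| ≤ 2 * C)
    (hsmall : ∀ s, 0 ≤ s → s ≤ δ → |u s| ≤ ε) (t : ℝ) (ht : 0 ≤ t) :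
    |(∫ s in (0:ℝ)..t, lam * Real.exp (-lam * s) * u s) + Real.exp (-lam * t) * u t| ≤
      ε + 2 * C * Real.exp (-lam * δ) := by
  have hexp : ∀ r : ℝ, (0:ℝ) < Real.exp r := fun r => Real.exp_pos r
  have hlast : |Real.exp (-lam * t) * u t| ≤ Real.exp (-lam * t) * (2 * C) := by
    rw [abs_mul, abs_of_nonneg (hexp _).le]
    exact mul_le_mul_of_nonneg_left (hbd t) (hexp _).le
  rcases le_or_gt t δ with hcase | hcase
  · -- t ≤ δ
    have hI : |∫ s in (0:ℝ)..t, lam * Real.exp (-lam * s) * u s| ≤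
        ε * (Real.exp (-lam * 0) - Real.exp (-lam * t)) := by
      apply aux_abs_integral_le lam ε 0 t hlam.le ht u hu
      intro s hs; exact hsmall s hs.1 (hs.2.trans hcase)
    have hlast' : |Real.exp (-lam * t) * u t| ≤ Real.exp (-lam * t) * ε := by
      rw [abs_mul, abs_of_nonneg (hexp _).le]
      exact mul_le_mul_of_nonneg_left (hsmall t ht hcase) (hexp _).le
    have htri := abs_add_le (∫ s in (0:ℝ)..t, lam * Real.exp (-lam * s) * u s)
      (Real.exp (-lam * t) * u t)
    have h0 : Real.exp (-lam * 0) = 1 := by norm_num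
    have hpos : (0:ℝ) ≤ 2 * C * Real.exp (-lam * δ) :=
      mul_nonneg (by linarith) (hexp _).le
    rw [h0] at hI
    nlinarith [hexp (-lam * t)]
  · -- δ < t
    have hi1 : IntervalIntegrable (fun s => lam * Real.exp (-lam * s) * u s)
        MeasureTheory.volume 0 δ :=
      (by continuity : Continuous fun s : ℝ => lam * Real.exp (-lam * s) * u s).intervalIntegrable _ _
    have hi2 : IntervalIntegrable (fun s => lam * Real.exp (-lam * s) * u s)
        MeasureTheory.volume δ t :=
      (by continuity : Continuous fun s : ℝ => lam * Real.exp (-lam * s) * u s).intervalIntegrable _ _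
    have hsplit : (∫ s in (0:ℝ)..t, lam * Real.exp (-lam * s) * u s) =
        (∫ s in (0:ℝ)..δ, lam * Real.exp (-lam * s) * u s) +
        (∫ s in δ..t, lam * Real.exp (-lam * s) * u s) :=
      (intervalIntegral.integral_add_adjacent_intervals hi1 hi2).symm
    have hI1 : |∫ s in (0:ℝ)..δ, lam * Real.exp (-lam * s) * u s| ≤
        ε * (Real.exp (-lam * 0) - Real.exp (-lam * δ)) := by
      apply aux_abs_integral_le lam ε 0 δ hlam.le hδ.le u hu
      intro s hs; exact hsmall s hs.1 hs.2
    have hI2 : |∫ s in δ..t, lam * Real.exp (-lam * s) * u s| ≤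
        (2 * C) * (Real.exp (-lam * δ) - Real.exp (-lam * t)) := by
      apply aux_abs_integral_le lam (2 * C) δ t hlam.le hcase.le u hu
      intro s _; exact hbd s
    have h0 : Real.exp (-lam * 0) = 1 := by norm_num
    rw [h0] at hI1
    rw [hsplit]
    have htri := abs_add_le ((∫ s in (0:ℝ)..δ, lam * Real.exp (-lam * s) * u s) +
      (∫ s in δ..t, lam * Real.exp (-lam * s) * u s)) (Real.exp (-lam * t) * u t)
    have htri2 := abs_add_le (∫ s in (0:ℝ)..δ, lam * Real.exp (-lam * s) * u s)
      (∫ s in δ..t, lam * Real.exp (-lam * s) * u s)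
    nlinarith [hexp (-lam * δ), hexp (-lam * t)]

set_option maxHeartbeats 1000000 in
/-- As `λ → ∞`, the discounted value function converges pointwise to `h`:
for a continuous trajectory `x` in `ℝⁿ` and continuous bounded `h`,
`lim_{λ→∞} V_λ(x₀) = h(x₀)` where `x₀ = x 0`. -/
theorem discounted_value_tendsto_h
    {n : ℕ}
    (x : ℝ → EuclideanSpace ℝ (Fin n)) (hx : Continuous x)
    (h : EuclideanSpace ℝ (Fin n) → ℝ) (hh : Continuous h)
    (hb : ∃ C, ∀ y, |h y| ≤ C)
    (V : ℝ → ℝ)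
    (hV : ∀ lam : ℝ, 0 < lam → V lam =
      ⨆ t : {t : ℝ // 0 ≤ t},
        ((∫ s in (0:ℝ)..(t : ℝ), lam * Real.exp (-lam * s) * h (x s)) +
          Real.exp (-lam * (t : ℝ)) * h (x (t : ℝ)))) :
    Filter.Tendsto V Filter.atTop (nhds (h (x 0))) := by
  obtain ⟨C, hC⟩ := hb
  have hC0 : 0 ≤ C := le_trans (abs_nonneg _) (hC (x 0))
  set h0 := h (x 0) with hh0
  set u : ℝ → ℝ := fun s => h (x s) - h0 with hu_def
  have hu : Continuous u := (hh.comp hx).sub continuous_const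
  have hbd : ∀ s, |u s| ≤ 2 * C := by
    intro s
    calc |u s| ≤ |h (x s)| + |h0| := abs_sub _ _
    _ ≤ 2 * C := by have := hC (x s); have := hC (x 0); simp only [hh0]; linarith
  rw [Metric.tendsto_nhds]
  intro ε hε
  -- continuity at 0 gives δ
  have hcont : ContinuousAt (fun s => h (x s)) 0 := (hh.comp hx).continuousAt
  rw [Metric.continuousAt_iff] at hcont
  obtain ⟨δ', hδ', hδ's⟩ := hcont (ε / 3) (by linarith)
  set δ := δ' / 2 with hδdef
  have hδ : 0 < δ := by positivity
  have hsmall : ∀ s, 0 ≤ s → s ≤ δ → |u s| ≤ ε / 3 := by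
    intro s hs1 hs2
    have : dist s 0 < δ' := by
      rw [Real.dist_eq, sub_zero, abs_of_nonneg hs1]; linarith
    have := hδ's this
    rw [Real.dist_eq] at this
    exact this.le
  -- eventually condition
  have htend : Filter.Tendsto (fun lam : ℝ => 2 * C * Real.exp (-lam * δ))
      Filter.atTop (nhds 0) := by
    have h1 : Filter.Tendsto (fun lam : ℝ => -lam * δ) Filter.atTop Filter.atBot := by
      have h2 := Filter.tendsto_neg_atTop_atBot.comp (Filter.tendsto_id.atTop_mul_const hδ :
        Filter.Tendsto (fun lam : ℝ => lam * δ) Filter.atTop Filter.atTop)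
      have h3 : Filter.Tendsto (fun lam : ℝ => -(lam * δ)) Filter.atTop Filter.atBot := h2
      simpa [neg_mul] using h3
    have := Real.tendsto_exp_atBot.comp h1
    have h3 := this.const_mul (2 * C)
    simpa using h3
  have hev : ∀ᶠ lam : ℝ in Filter.atTop, 2 * C * Real.exp (-lam * δ) < ε / 3 := by
    have := htend.eventually (eventually_lt_nhds (show (0:ℝ) < ε / 3 by linarith))
    exact this
  filter_upwards [hev, Filter.eventually_ge_atTop (1 : ℝ)] with lam hlam1 hlam2
  have hlam : 0 < lam := lt_of_lt_of_le one_pos hlam2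
  rw [hV lam hlam]
  set g : {t : ℝ // 0 ≤ t} → ℝ := fun t =>
    (∫ s in (0:ℝ)..(t : ℝ), lam * Real.exp (-lam * s) * h (x s)) +
      Real.exp (-lam * (t : ℝ)) * h (x (t : ℝ)) with hg
  have hrw : ∀ t : {t : ℝ // 0 ≤ t}, g t = h0 +
      ((∫ s in (0:ℝ)..(t:ℝ), lam * Real.exp (-lam * s) * u s) +
        Real.exp (-lam * (t:ℝ)) * u (t:ℝ)) := by
    intro t
    have hi1 : IntervalIntegrable (fun s => lam * Real.exp (-lam * s) * u s)
        MeasureTheory.volume 0 (t:ℝ) :=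
      (by continuity : Continuous fun s : ℝ => lam * Real.exp (-lam * s) * u s).intervalIntegrable _ _
    have hi2 : IntervalIntegrable (fun s => h0 * (lam * Real.exp (-lam * s)))
        MeasureTheory.volume 0 (t:ℝ) :=
      (by continuity : Continuous fun s : ℝ => h0 * (lam * Real.exp (-lam * s))).intervalIntegrable _ _
    have heq : (fun s : ℝ => lam * Real.exp (-lam * s) * h (x s)) =
        fun s => lam * Real.exp (-lam * s) * u s + h0 * (lam * Real.exp (-lam * s)) := by
      funext s; simp only [hu_def]; ring
    have hIeq : (∫ s in (0:ℝ)..(t:ℝ), lam * Real.exp (-lam * s) * h (x s)) =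
        (∫ s in (0:ℝ)..(t:ℝ), lam * Real.exp (-lam * s) * u s) +
          h0 * (1 - Real.exp (-lam * (t:ℝ))) := by
      rw [heq, intervalIntegral.integral_add hi1 hi2, intervalIntegral.integral_const_mul,
        aux_integral_lam_exp]
      norm_num
    simp only [hg]
    rw [hIeq]
    simp only [hu_def]
    ring
  have hkey : ∀ t : {t : ℝ // 0 ≤ t}, g t ≤ h0 + (ε / 3 + 2 * C * Real.exp (-lam * δ)) := by
    intro t
    rw [hrw t]
    have := aux_key lam δ (ε/3) C hlam hδ (by linarith) hC0 u hu hbd hsmall (t:ℝ) t.2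
    have := abs_le.mp this
    linarith [this.2]
  have hbdd : BddAbove (Set.range g) := by
    refine ⟨h0 + (ε / 3 + 2 * C * Real.exp (-lam * δ)), ?_⟩
    rintro _ ⟨t, rfl⟩; exact hkey t
  have hne : Nonempty {t : ℝ // 0 ≤ t} := ⟨⟨0, le_refl 0⟩⟩
  have hlow : h0 ≤ ⨆ t, g t := by
    have h00 : g ⟨0, le_refl 0⟩ = h0 := by
      simp [hg, intervalIntegral.integral_same, hh0]
    calc h0 = g ⟨0, le_refl 0⟩ := h00.symm
    _ ≤ ⨆ t, g t := le_ciSup hbdd _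
  have hhigh : (⨆ t, g t) ≤ h0 + (ε / 3 + 2 * C * Real.exp (-lam * δ)) := ciSup_le hkey
  rw [Real.dist_eq, abs_lt]
  constructor <;> [skip; skip]
  · have he : (0:ℝ) ≤ 2 * C * Real.exp (-lam * δ) := by positivity
    linarith
  · linarith
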